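/- Let H = ⟨a_1, ..., a_n⟩ (n ≥ 3, minimally generated) and suppose some pseudo-Frobenius number α satisfies (n-1)α ∉ H. Then H is almost symmetric. -/

import Mathlib

/-- The numerical semigroup (as a subset of ℤ) generated by `a`. -/
def SgGen {n : ℕ} (a : Fin n → ℕ) : Set ℤ :=
  {x | ∃ c : Fin n → ℕ, x = ∑ i, (c i : ℤ) * a i}

/-- `α` is a pseudo-Frobenius number of `⟨a⟩`. -/
def IsPF {n : ℕ} (a : Fin n → ℕ) (α : ℤ) : Prop :=
  α ∉ SgGen a ∧ ∀ i, α + a i ∈ SgGen a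

/-- `a` minimally generates: no generator is a combination of the others. -/
def MinGen {n : ℕ} (a : Fin n → ℕ) : Prop :=
  ∀ i, ¬ ∃ c : Fin n → ℕ, c i = 0 ∧ (a i : ℤ) = ∑ j, (c j : ℤ) * a j
namespace Stmt16H

variable {n : ℕ} {a : Fin n → ℕ}

lemma sg_zero : (0:ℤ) ∈ SgGen a := ⟨0, by simp⟩

lemma sg_add {x y : ℤ} (hx : x ∈ SgGen a) (hy : y ∈ SgGen a) : x + y ∈ SgGen a := by
  obtain ⟨c, rfl⟩ := hx
  obtain ⟨d, rfl⟩ := hy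
  refine ⟨c + d, ?_⟩
  rw [← Finset.sum_add_distrib]
  refine Finset.sum_congr rfl fun i _ => ?_
  simp only [Pi.add_apply]
  push_cast
  ring

lemma sg_nonneg {x : ℤ} (hx : x ∈ SgGen a) : 0 ≤ x := by
  obtain ⟨c, rfl⟩ := hx
  positivity

lemma mem_of_int {x : ℤ} (c : Fin n → ℤ) (h0 : ∀ i, 0 ≤ c i)
    (hx : x = ∑ i, c i * a i) : x ∈ SgGen a := by
  refine ⟨fun i => (c i).toNat, ?_⟩
  rw [hx]
  exact Finset.sum_congr rfl fun i _ => by rw [Int.toNat_of_nonneg (h0 i)]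

lemma sum_ite_mul (t : ℤ) (j : Fin n) :
    (∑ i, (if i = j then t else 0) * (a i : ℤ)) = t * a j := by
  simp [ite_mul, Finset.sum_ite_eq']

lemma sg_gen (i : Fin n) : (a i : ℤ) ∈ SgGen a := by
  refine mem_of_int (fun j => if j = i then 1 else 0) (fun j => by positivity) ?_
  rw [sum_ite_mul]; ring

lemma sg_smul {x : ℤ} (k : ℤ) (hk : 0 ≤ k) (hx : x ∈ SgGen a) : k * x ∈ SgGen a := by
  obtain ⟨c, rfl⟩ := hx
  refine mem_of_int (fun i => k * c i) (fun i => by positivity) ?_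
  rw [Finset.mul_sum]
  exact Finset.sum_congr rfl fun i _ => by ring

lemma sg_sub_gen (cc : Fin n → ℕ) (j : Fin n) (hj : cc j ≠ 0) :
    (∑ i, (cc i : ℤ) * a i) - a j ∈ SgGen a := by
  refine mem_of_int (fun i => (cc i : ℤ) - if i = j then 1 else 0) ?_ ?_
  · intro i
    by_cases h : i = j <;> simp [h] <;> omega
  · rw [show (∀ i:Fin n, True) → (∑ i, ((cc i : ℤ) - if i = j then 1 else 0) * a i)
      = (∑ i, (cc i:ℤ) * a i) - ∑ i, (if i = j then (1:ℤ) else 0) * a i from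
      fun _ => by rw [← Finset.sum_sub_distrib]; exact Finset.sum_congr rfl fun i _ => by ring]
    · rw [sum_ite_mul]; ring
    · intro _; trivial

lemma pf_add (hγ : IsPF a γ) {x : ℤ} (hx : x ∈ SgGen a) (hx0 : x ≠ 0) :
    γ + x ∈ SgGen a := by
  obtain ⟨cc, rfl⟩ := hx
  have hex : ∃ j, cc j ≠ 0 := by
    by_contra h
    push_neg at h
    exact hx0 (by simp [h])
  obtain ⟨j, hj⟩ := hex
  have h1 := sg_sub_gen (a := a) cc j hj
  have := sg_add (hγ.2 j) h1
  convert this using 1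
  ring




variable {n : ℕ} {a : Fin n → ℕ}

lemma sum_sub_ite (cc : Fin n → ℤ) (t : ℤ) (j : Fin n) :
    (∑ i, (cc i - if i = j then t else 0) * a i) = (∑ i, cc i * a i) - t * a j := by
  rw [← sum_ite_mul (a := a) t j, ← Finset.sum_sub_distrib]
  exact Finset.sum_congr rfl fun i _ => by ring

lemma pf_pos (hn : 2 ≤ n) (ha : ∀ i, 0 < a i) (hmin : MinGen a)
    {γ : ℤ} (hγ : IsPF a γ) : 0 < γ := by
  by_contra hle
  push_neg at hle
  have hγ0 : γ ≠ 0 := fun h => hγ.1 (h ▸ sg_zero)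
  have hneg : γ < 0 := lt_of_le_of_ne hle hγ0
  haveI : NeZero n := ⟨by omega⟩
  obtain ⟨i₀, -, hi₀⟩ := Finset.exists_min_image Finset.univ a ⟨0, Finset.mem_univ 0⟩
  obtain ⟨cc, hcc⟩ := hγ.2 i₀
  by_cases hex : ∃ j, cc j ≠ 0
  · obtain ⟨j, hj⟩ := hex
    have h1 : (a j : ℤ) ≤ ∑ i, (cc i:ℤ) * a i := by
      calc (a j:ℤ) ≤ (cc j:ℤ) * a j := by
            have : (1:ℤ) ≤ cc j := by exact_mod_cast Nat.one_le_iff_ne_zero.mpr hj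
            nlinarith [Int.natCast_nonneg (a j)]
        _ ≤ ∑ i, (cc i:ℤ) * a i :=
            Finset.single_le_sum (f := fun i => (cc i:ℤ) * a i)
              (fun i _ => by positivity) (Finset.mem_univ j)
    have h2 : (a i₀ : ℤ) ≤ a j := by exact_mod_cast hi₀ j (Finset.mem_univ j)
    linarith [hcc]
  · push_neg at hex
    have h0 : γ + a i₀ = 0 := by rw [hcc]; simp [hex]
    obtain ⟨j, hj⟩ : ∃ j : Fin n, j ≠ i₀ :=
      Fintype.exists_ne_of_one_lt_card (by simpa using (show 1 < n by omega)) i₀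
    obtain ⟨dd, hdd⟩ := hγ.2 j
    have hddj : dd j = 0 := by
      by_contra hddj
      have h1 : (a j : ℤ) ≤ ∑ i, (dd i:ℤ) * a i := by
        calc (a j:ℤ) ≤ (dd j:ℤ) * a j := by
              have : (1:ℤ) ≤ dd j := by exact_mod_cast Nat.one_le_iff_ne_zero.mpr hddj
              nlinarith [Int.natCast_nonneg (a j)]
          _ ≤ ∑ i, (dd i:ℤ) * a i :=
              Finset.single_le_sum (f := fun i => (dd i:ℤ) * a i)
                (fun i _ => by positivity) (Finset.mem_univ j)
      linarith [hdd]
    apply hmin j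
    refine ⟨fun l => dd l + if l = i₀ then 1 else 0, by simp [hddj, hj], ?_⟩
    have hexp : (∑ l, ((dd l + if l = i₀ then 1 else 0 : ℕ):ℤ) * a l)
        = (∑ l, (dd l : ℤ) * a l) + ∑ l, (if l = i₀ then (1:ℤ) else 0) * a l := by
      rw [← Finset.sum_add_distrib]
      refine Finset.sum_congr rfl fun l _ => by
        by_cases h : l = i₀ <;> simp [h] <;> push_cast <;> ring
    rw [hexp, sum_ite_mul]
    have hai : (a i₀ : ℤ) = -γ := by linarith
    linarith [hdd]

lemma cyc {α : ℤ} (c : Fin n → Fin n → ℕ)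
    (hcrow : ∀ i, (α + a i : ℤ) = ∑ j, (c i j : ℤ) * a j)
    {m : ℕ} (v : Fin (m+1) → Fin n) (hv : Function.Injective v)
    (hedge : ∀ k : Fin (m+1), 1 ≤ c (v k) (v (k + 1))) :
    ((m+1 : ℕ) : ℤ) * α ∈ SgGen a := by
  refine mem_of_int
    (fun j => ∑ k : Fin (m+1), ((c (v k) j : ℤ) - if v (k+1) = j then 1 else 0)) ?_ ?_
  · intro j
    refine Finset.sum_nonneg fun k _ => ?_
    by_cases h : v (k+1) = j
    · have h1 : (1:ℤ) ≤ (c (v k) j : ℤ) := by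
        have := hedge k; rw [h] at this; exact_mod_cast this
      rw [if_pos h]
      omega
    · rw [if_neg h]
      simp
  · have hswap : (∑ j, (∑ k : Fin (m+1), ((c (v k) j : ℤ) - if v (k+1) = j then 1 else 0)) * a j)
        = ∑ k : Fin (m+1), ∑ j, ((c (v k) j : ℤ) - if v (k+1) = j then 1 else 0) * a j := by
      rw [Finset.sum_comm]
      exact Finset.sum_congr rfl fun j _ => by rw [Finset.sum_mul]
    rw [hswap]
    have hterm : ∀ k : Fin (m+1),
        (∑ j, ((c (v k) j : ℤ) - if v (k+1) = j then 1 else 0) * a j)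
        = (α + a (v k)) - a (v (k+1)) := by
      intro k
      have : (∑ j, ((c (v k) j : ℤ) - if v (k+1) = j then 1 else 0) * a j)
          = (∑ j, (c (v k) j : ℤ) * a j) - ∑ j, (if j = v (k+1) then (1:ℤ) else 0) * a j := by
        rw [← Finset.sum_sub_distrib]
        refine Finset.sum_congr rfl fun j _ => by
          by_cases h : v (k+1) = j
          · rw [if_pos h, if_pos h.symm]
            ring
          · rw [if_neg h, if_neg (fun hh => h hh.symm)]
            ring
      rw [this, sum_ite_mul, ← hcrow (v k)]
      ring
    rw [Finset.sum_congr rfl fun k _ => hterm k]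
    have hre : (∑ k : Fin (m+1), (a (v (k+1)) : ℤ)) = ∑ k : Fin (m+1), (a (v k) : ℤ) :=
      Equiv.sum_comp (Equiv.addRight (1 : Fin (m+1))) (fun k => (a (v k) : ℤ))
    rw [Finset.sum_sub_distrib, Finset.sum_add_distrib, hre]
    simp [Finset.sum_const, Finset.card_univ]

lemma sum_coeff_add {n : ℕ} {a : Fin n → ℕ} (u w : Fin n → ℕ) :
    (∑ i, (((u + w) i : ℕ):ℤ) * a i) = (∑ i, (u i:ℤ) * a i) + ∑ i, (w i:ℤ) * a i := by
  rw [← Finset.sum_add_distrib]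
  refine Finset.sum_congr rfl fun i _ => ?_
  simp only [Pi.add_apply]
  push_cast
  ring

end Stmt16H


theorem stmt16 {n : ℕ} (hn : 3 ≤ n) (a : Fin n → ℕ) (ha : ∀ i, 0 < a i)
    (hgcd : Finset.univ.gcd a = 1) (hmin : MinGen a)
    (α : ℤ) (hα : IsPF a α) (hout : ((n : ℤ) - 1) * α ∉ SgGen a) :
    ∃ F : ℤ, IsGreatest {m : ℤ | m ∉ SgGen a} F ∧
      ∀ γ : ℤ, IsPF a γ → γ ≠ F → IsPF a (F - γ) := by
  classical
  have hα1 : 0 < α := Stmt16H.pf_pos (by omega) ha hmin hα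
  -- multiples of α stay out of H up to (n-1)α
  have mono : ∀ k : ℕ, 1 ≤ k → (k:ℤ)*α ∈ SgGen a → ∀ l : ℕ, k ≤ l → (l:ℤ)*α ∈ SgGen a := by
    intro k hk1 hk
    refine Nat.le_induction hk ?_
    intro l hl ih
    have h1 : ((l+1:ℕ):ℤ)*α = α + (l:ℤ)*α := by push_cast; ring
    rw [h1]
    refine Stmt16H.pf_add hα ih ?_
    have h2 : (1:ℤ) ≤ (l:ℤ) := by exact_mod_cast hk1.trans hl
    nlinarith
  have LemA : ∀ t : ℤ, 1 ≤ t → t ≤ (n:ℤ) - 1 → t * α ∉ SgGen a := by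
    intro t ht1 htn hmem
    apply hout
    have h2 := mono t.toNat (by omega) (by rwa [Int.toNat_of_nonneg (by omega)]) (n-1) (by omega)
    have h3 : ((n-1:ℕ):ℤ) = (n:ℤ) - 1 := by omega
    rwa [h3] at h2
  -- RF rows of α, with zero diagonal
  have row : ∀ i, ∃ cc : Fin n → ℕ, cc i = 0 ∧ (α + a i : ℤ) = ∑ j, (cc j : ℤ) * a j := by
    intro i
    obtain ⟨cc, hcc⟩ := hα.2 i
    by_cases hci : cc i = 0
    · exact ⟨cc, hci, hcc⟩
    · exfalso
      apply hα.1
      have h1 := Stmt16H.sg_sub_gen (a := a) cc i hci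
      rw [← hcc] at h1
      convert h1 using 1
      ring
  choose c hc0 hcrow using row
  have hrowpos : ∀ i, ∃ j, c i j ≠ 0 := by
    intro i
    by_contra hno
    push_neg at hno
    have h1 : (α + a i : ℤ) = 0 := by rw [hcrow i]; simp [hno]
    have h2 : (1:ℤ) ≤ a i := by exact_mod_cast ha i
    linarith
  choose σ hσ using hrowpos
  have hσne : ∀ i, σ i ≠ i := by
    intro i h
    exact hσ i (by rw [h]; exact hc0 i)
  -- orbit structure of σ
  have horbit : ∀ j : Fin n, (∀ s t : ℕ, s < t → t < n → σ^[s] j ≠ σ^[t] j) ∧ σ^[n] j = j := by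
    intro j
    obtain ⟨x, y, hxy, hfxy⟩ := Fintype.exists_ne_map_eq_of_card_lt
      (fun t : Fin (n+1) => σ^[(t:ℕ)] j) (by simp)
    have hPex : ∃ t : ℕ, ∃ s, s < t ∧ σ^[s] j = σ^[t] j := by
      rcases Ne.lt_or_gt hxy with h | h
      · exact ⟨(y:ℕ), (x:ℕ), Fin.lt_iff_val_lt_val.mp h, hfxy⟩
      · exact ⟨(x:ℕ), (y:ℕ), Fin.lt_iff_val_lt_val.mp h, hfxy.symm⟩
    set t₁ := Nat.find hPex with ht₁def
    obtain ⟨s₁, hs₁lt, hs₁⟩ := Nat.find_spec hPex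
    have hmin' : ∀ t, t < t₁ → ¬ ∃ s, s < t ∧ σ^[s] j = σ^[t] j :=
      fun t ht => Nat.find_min hPex ht
    have ht₁n : t₁ ≤ n := by
      have hy := y.isLt
      have hx := x.isLt
      rcases Ne.lt_or_gt hxy with h | h
      · have := Nat.find_min' hPex ⟨(x:ℕ), Fin.lt_iff_val_lt_val.mp h, hfxy⟩; omega
      · have := Nat.find_min' hPex ⟨(y:ℕ), Fin.lt_iff_val_lt_val.mp h, hfxy.symm⟩; omega
    set M := t₁ - s₁ - 1 with hMdef
    have hMeq : M + 1 = t₁ - s₁ := by omega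
    set v : Fin (M+1) → Fin n := fun k => σ^[s₁ + (k:ℕ)] j with hvdef
    have hstep : ∀ k : Fin (M+1), v (k+1) = σ (v k) := by
      intro k
      have hkval : ((k+1 : Fin (M+1)) : ℕ) = ((k:ℕ)+1) % (M+1) := by
        rw [Fin.val_add, Fin.val_one', Nat.add_mod_mod]
      by_cases hc : (k:ℕ) + 1 < M + 1
      · have h1 : ((k+1 : Fin (M+1)) : ℕ) = (k:ℕ)+1 := by
          rw [hkval]; exact Nat.mod_eq_of_lt hc
        simp only [hvdef]
        rw [h1, show s₁ + ((k:ℕ)+1) = (s₁ + (k:ℕ)) + 1 by omega,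
          Function.iterate_succ_apply']
      · have hk : (k:ℕ) = M := by have := k.isLt; omega
        have h1 : ((k+1 : Fin (M+1)) : ℕ) = 0 := by rw [hkval, hk]; exact Nat.mod_self _
        simp only [hvdef]
        rw [h1, hk]
        have h2 : σ (σ^[s₁ + M] j) = σ^[t₁] j := by
          rw [← Function.iterate_succ_apply' σ (s₁+M) j]
          congr 1
          omega
        rw [h2, ← hs₁]
        simp
    have hvinj : Function.Injective v := by
      intro k l hkl
      simp only [hvdef] at hkl
      by_contra hne
      have hklval : (k:ℕ) ≠ (l:ℕ) := fun h => hne (Fin.ext h)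
      rcases Nat.lt_or_ge (k:ℕ) (l:ℕ) with h | h
      · exact hmin' (s₁ + (l:ℕ)) (by have := l.isLt; omega) ⟨s₁ + (k:ℕ), by omega, hkl⟩
      · exact hmin' (s₁ + (k:ℕ)) (by have := k.isLt; omega) ⟨s₁ + (l:ℕ), by omega, hkl.symm⟩
    have hcyc := Stmt16H.cyc c hcrow v hvinj
      (fun k => by rw [hstep k]; exact Nat.one_le_iff_ne_zero.mpr (hσ (v k)))
    have hMn : n ≤ M + 1 := by
      by_contra hlt
      push_neg at hlt
      exact LemA ((M+1:ℕ):ℤ) (by omega) (by omega) hcyc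
    have hs10 : s₁ = 0 := by omega
    have ht10 : t₁ = n := by omega
    constructor
    · intro s t hst htn heq
      exact hmin' t (by omega) ⟨s, hst, heq⟩
    · have hfind : Nat.find hPex = n := by rw [← ht₁def]; exact ht10
      have h := hs₁
      rw [hs10, hfind] at h
      simpa using h.symm
  have hper : ∀ j, σ^[n] j = j := fun j => (horbit j).2
  have hdist : ∀ j, ∀ s t : ℕ, s < t → t < n → σ^[s] j ≠ σ^[t] j := fun j => (horbit j).1
  have hσbij : Function.Bijective σ := by
    have hsurj : Function.Surjective σ := by
      intro y
      refine ⟨σ^[n-1] y, ?_⟩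
      have h1 : σ (σ^[n-1] y) = σ^[(n-1)+1] y := (Function.iterate_succ_apply' σ (n-1) y).symm
      rw [h1, show n-1+1 = n by omega]
      exact hper y
    exact ⟨Finite.injective_iff_surjective.mpr hsurj, hsurj⟩
  set e : Fin n ≃ Fin n := Equiv.ofBijective σ hσbij with hedef
  have hesymm : ∀ j, σ (e.symm j) = j := fun j => e.apply_symm_apply j
  -- rows are singletons
  have hsing : ∀ i j, c i j ≠ 0 → j = σ i := by
    intro i j hcij
    by_contra hne
    have hji : j ≠ i := by
      intro h
      rw [h] at hcij
      exact hcij (hc0 i)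
    have hginj : Function.Injective (fun t : Fin n => σ^[(t:ℕ)] j) := by
      intro s t hst
      by_contra hne'
      have hv : (s:ℕ) ≠ (t:ℕ) := fun h => hne' (Fin.ext h)
      rcases Nat.lt_or_ge (s:ℕ) (t:ℕ) with h | h
      · exact hdist j s t h t.isLt hst
      · exact hdist j t s (by omega) s.isLt hst.symm
    obtain ⟨t, ht⟩ := Finite.injective_iff_surjective.mp hginj i
    simp only at ht
    have htn1 : (t:ℕ) ≠ n - 1 := by
      intro h
      apply hne
      have h2 : σ (σ^[(t:ℕ)] j) = σ^[n] j := by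
        rw [← Function.iterate_succ_apply' σ (t:ℕ) j]
        congr 1
        omega
      rw [ht, hper j] at h2
      exact h2.symm
    set T := (t:ℕ) with hTdef
    set w : Fin (T+1) → Fin n := fun k => σ^[(k:ℕ)] j with hwdef
    have hwinj : Function.Injective w := by
      intro k l hkl
      simp only [hwdef] at hkl
      by_contra hne'
      have hv : (k:ℕ) ≠ (l:ℕ) := fun h => hne' (Fin.ext h)
      have hTn : T + 1 ≤ n := by have := t.isLt; omega
      rcases Nat.lt_or_ge (k:ℕ) (l:ℕ) with h | h
      · exact hdist j (k:ℕ) (l:ℕ) h (by have := l.isLt; omega) hkl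
      · exact hdist j (l:ℕ) (k:ℕ) (by omega) (by have := k.isLt; omega) hkl.symm
    have hwedge : ∀ k : Fin (T+1), 1 ≤ c (w k) (w (k+1)) := by
      intro k
      have hkval : ((k+1 : Fin (T+1)) : ℕ) = ((k:ℕ)+1) % (T+1) := by
        rw [Fin.val_add, Fin.val_one', Nat.add_mod_mod]
      by_cases hc2 : (k:ℕ) < T
      · have h1 : ((k+1 : Fin (T+1)) : ℕ) = (k:ℕ)+1 := by
          rw [hkval]; exact Nat.mod_eq_of_lt (by omega)
        have hstep2 : w (k+1) = σ (w k) := by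
          simp only [hwdef]
          rw [h1, Function.iterate_succ_apply']
        rw [hstep2]
        exact Nat.one_le_iff_ne_zero.mpr (hσ (w k))
      · have hk : (k:ℕ) = T := by have := k.isLt; omega
        have h1 : ((k+1 : Fin (T+1)) : ℕ) = 0 := by rw [hkval, hk]; exact Nat.mod_self _
        have hwk : w k = i := by simp only [hwdef]; rw [hk]; exact ht
        have hwk1 : w (k+1) = j := by simp only [hwdef]; rw [h1]; rfl
        rw [hwk, hwk1]
        exact Nat.one_le_iff_ne_zero.mpr hcij
    have hcyc := Stmt16H.cyc c hcrow w hwinj hwedge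
    have hTbound : T ≤ n - 2 := by have := t.isLt; omega
    exact LemA ((T+1:ℕ):ℤ) (by omega) (by omega) hcyc
  set r : Fin n → ℕ := fun i => c i (σ i) with hrdef
  have hr1 : ∀ i, 1 ≤ r i := fun i => Nat.one_le_iff_ne_zero.mpr (hσ i)
  have hrow2 : ∀ i, (α + a i : ℤ) = (r i : ℤ) * a (σ i) := by
    intro i
    rw [hcrow i]
    exact Finset.sum_eq_single_of_mem (σ i) (Finset.mem_univ _) (fun j _ hjne => by
      have h1 : c i j = 0 := by
        by_contra h
        exact hjne (hsing i j h)
      rw [h1]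
      simp)
  have hsum : (n:ℤ) * α = ∑ j, ((r (e.symm j) : ℤ) - 1) * a j := by
    have h1 : (∑ i, (α + (a i:ℤ))) = (n:ℤ)*α + ∑ i, (a i:ℤ) := by
      rw [Finset.sum_add_distrib]
      simp [Finset.sum_const, Finset.card_univ, nsmul_eq_mul]
    have h2 : (∑ i, (α + (a i:ℤ))) = ∑ j, (r (e.symm j) : ℤ) * a j := by
      rw [Finset.sum_congr rfl (fun i _ => hrow2 i)]
      refine Fintype.sum_equiv e _ _ ?_
      intro i
      rw [e.symm_apply_apply]
      rfl
    have h3 : (∑ j, ((r (e.symm j) : ℤ) - 1) * a j)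
        = (∑ j, (r (e.symm j) : ℤ) * a j) - ∑ j, (a j:ℤ) := by
      rw [← Finset.sum_sub_distrib]
      exact Finset.sum_congr rfl fun j _ => by ring
    linarith [h1, h2, h3]
  -- KEY: any PF f with f + α ∈ H equals (n-1)α
  have KEY : ∀ f : ℤ, IsPF a f → f + α ∈ SgGen a → f = ((n:ℤ)-1) * α := by
    intro f hf hfα
    obtain ⟨cc, hcc⟩ := hfα
    have hlt : ∀ i, (cc (σ i) : ℤ) ≤ (r i : ℤ) - 1 := by
      intro i
      by_contra hge
      push_neg at hge
      apply hf.1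
      refine Stmt16H.mem_of_int
        (fun j => (cc j : ℤ) - (if j = σ i then (r i:ℤ) else 0) + (if j = i then 1 else 0))
        ?_ ?_
      · intro j
        by_cases h1 : j = σ i
        · have h2 : j ≠ i := by rw [h1]; exact hσne i
          rw [if_pos h1, if_neg h2, h1]
          omega
        · rw [if_neg h1]
          have h3 : (0:ℤ) ≤ (cc j:ℤ) := by positivity
          by_cases h2 : j = i
          · rw [if_pos h2]; linarith
          · rw [if_neg h2]; linarith
      · have hsplit : (∑ j, ((cc j : ℤ) - (if j = σ i then (r i:ℤ) else 0)
            + (if j = i then 1 else 0)) * a j)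
            = ((∑ j, (cc j:ℤ) * a j) - (∑ j, (if j = σ i then (r i:ℤ) else 0) * a j))
              + ∑ j, (if j = i then (1:ℤ) else 0) * a j := by
          rw [← Finset.sum_sub_distrib, ← Finset.sum_add_distrib]
          exact Finset.sum_congr rfl fun j _ => by ring
        rw [hsplit, Stmt16H.sum_ite_mul, Stmt16H.sum_ite_mul, ← hcc]
        have h4 := hrow2 i
        linarith
    have hd : ∀ j, 0 ≤ ((r (e.symm j) : ℤ) - 1) - cc j := by
      intro j
      have h1 := hlt (e.symm j)
      rw [hesymm j] at h1
      linarith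
    have hhmem : (∑ j, (((r (e.symm j):ℤ) - 1) - cc j) * a j) ∈ SgGen a :=
      Stmt16H.mem_of_int _ hd rfl
    set hh := ∑ j, (((r (e.symm j):ℤ) - 1) - cc j) * a j with hhdef
    have h3 : hh = (∑ j, ((r (e.symm j):ℤ) - 1) * a j) - ∑ j, (cc j:ℤ) * a j := by
      rw [hhdef, ← Finset.sum_sub_distrib]
      exact Finset.sum_congr rfl fun j _ => by ring
    have hfh : f = ((n:ℤ)-1)*α - hh := by
      rw [h3, ← hsum, ← hcc]
      ring
    by_cases hz : hh = 0
    · rw [hfh, hz]; ring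
    · exfalso
      apply hout
      have hfin : ((n:ℤ)-1)*α = f + hh := by rw [hfh]; ring
      rw [hfin]
      exact Stmt16H.pf_add hf hhmem hz
  -- Bezout / cofinality
  have bez : ∃ x : ℤ, x ∈ SgGen a ∧ x + 1 ∈ SgGen a := by
    let S : AddSubgroup ℤ := {
      carrier := {x : ℤ | ∃ u v : Fin n → ℕ,
        x = (∑ i, (u i : ℤ) * a i) - ∑ i, (v i : ℤ) * a i}
      zero_mem' := ⟨0, 0, by simp⟩
      add_mem' := by
        rintro x y ⟨u1, v1, rfl⟩ ⟨u2, v2, rfl⟩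
        exact ⟨u1 + u2, v1 + v2, by
          rw [Stmt16H.sum_coeff_add, Stmt16H.sum_coeff_add]; ring⟩
      neg_mem' := by
        rintro x ⟨u, v, rfl⟩
        exact ⟨v, u, by ring⟩ }
    have hmemS : ∀ i, (a i : ℤ) ∈ S := by
      intro i
      refine ⟨fun j => if j = i then 1 else 0, 0, ?_⟩
      have hcast : (∑ j, (((if j = i then 1 else 0 : ℕ)):ℤ) * a j)
          = ∑ j, (if j = i then (1:ℤ) else 0) * a j := by
        refine Finset.sum_congr rfl fun j _ => ?_
        by_cases h : j = i <;> simp [h]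
      rw [hcast, Stmt16H.sum_ite_mul]
      simp
    obtain ⟨g, hg⟩ := Int.subgroup_cyclic S
    have hdvd : ∀ i, g ∣ (a i : ℤ) := by
      intro i
      have h1 := hmemS i
      rw [hg, AddSubgroup.mem_closure_singleton] at h1
      obtain ⟨k, hk⟩ := h1
      exact ⟨k, by rw [← hk, zsmul_eq_mul]; push_cast; ring⟩
    have hgdvd1 : g.natAbs ∣ 1 := by
      rw [← hgcd]
      refine Finset.dvd_gcd fun i _ => ?_
      have h2 := Int.natAbs_dvd_natAbs.mpr (hdvd i)
      simpa using h2
    have h1S : (1:ℤ) ∈ S := by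
      rw [hg, AddSubgroup.mem_closure_singleton]
      rcases Int.natAbs_eq_iff.mp (Nat.dvd_one.mp hgdvd1) with h | h
      · exact ⟨1, by rw [h]; simp⟩
      · exact ⟨-1, by rw [h]; simp⟩
    obtain ⟨u, v, huv⟩ := h1S
    refine ⟨∑ i, (v i:ℤ) * a i, ⟨v, rfl⟩, ?_⟩
    have h2 : (∑ i, (v i:ℤ)*a i) + 1 = ∑ i, (u i:ℤ)*a i := by linarith [huv]
    rw [h2]
    exact ⟨u, rfl⟩
  obtain ⟨Q, hQ, hQ1⟩ := bez
  have hQ0 : 0 ≤ Q := Stmt16H.sg_nonneg hQ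
  set N : ℤ := Q*Q + Q + 1 with hNdef
  have hN : ∀ z : ℤ, N ≤ z → z ∈ SgGen a := by
    intro z hz
    rcases eq_or_lt_of_le hQ0 with h0 | hpos
    · have hQz : Q = 0 := h0.symm
      have h1 : (1:ℤ) ∈ SgGen a := by
        rw [show (1:ℤ) = Q + 1 by rw [hQz]; ring]
        exact hQ1
      have hz' : (0:ℤ) ≤ z := by
        rw [hNdef, hQz] at hz
        linarith
      have h2 := Stmt16H.sg_smul z hz' h1
      simpa using h2
    · set t := z % Q with htdef
      set q := z / Q with hqdef
      have ht0 : 0 ≤ t := Int.emod_nonneg z (by omega)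
      have htQ : t < Q := Int.emod_lt_of_pos z hpos
      have hzq : z = Q * q + t := by rw [htdef, hqdef]; exact (Int.mul_ediv_add_emod z Q).symm
      have hq : t ≤ q := by
        by_contra hcon
        push_neg at hcon
        have h5 : q ≤ t - 1 := by omega
        have h6 : Q * q ≤ Q * (t-1) := by nlinarith
        rw [hNdef] at hz
        nlinarith
      have hzeq : z = (q - t) * Q + t * (Q+1) := by rw [hzq]; ring
      rw [hzeq]
      exact Stmt16H.sg_add (Stmt16H.sg_smul _ (by omega) hQ)
        (Stmt16H.sg_smul _ (by omega) hQ1)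
  -- classification of PF numbers
  have classify : ∀ γ : ℤ, IsPF a γ → ∃ k : ℕ, 1 ≤ k ∧ (k:ℤ) ≤ (n:ℤ)-1 ∧ γ = (k:ℤ)*α := by
    intro γ hγ
    have hγpos : 0 < γ := Stmt16H.pf_pos (by omega) ha hmin hγ
    have hPex : ∃ k : ℕ, γ + (k:ℤ)*α ∈ SgGen a := by
      refine ⟨(N - γ).toNat, hN _ ?_⟩
      have h1 : (N - γ) ≤ ((N - γ).toNat : ℤ) := Int.self_le_toNat _
      have h2 : (1:ℤ) ≤ α := hα1
      have h3 : (0:ℤ) ≤ ((N-γ).toNat : ℤ) := by positivity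
      nlinarith [mul_nonneg h3 (by linarith : (0:ℤ) ≤ α - 1)]
    set k₀ := Nat.find hPex with hk₀def
    have hk₀ : γ + (k₀:ℤ)*α ∈ SgGen a := Nat.find_spec hPex
    have hk₀min : ∀ k : ℕ, k < k₀ → γ + (k:ℤ)*α ∉ SgGen a := fun k hk => Nat.find_min hPex hk
    have hk₀pos : 1 ≤ k₀ := by
      by_contra h
      push_neg at h
      have h1 : k₀ = 0 := by omega
      rw [h1] at hk₀
      simp at hk₀
      exact hγ.1 hk₀
    have hfnot : γ + ((k₀-1:ℕ):ℤ)*α ∉ SgGen a := hk₀min _ (by omega)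
    have hfPF : IsPF a (γ + ((k₀-1:ℕ):ℤ)*α) := by
      refine ⟨hfnot, fun i => ?_⟩
      have h1 : γ + (a i:ℤ) ∈ SgGen a := hγ.2 i
      have h2 : (0:ℤ) < γ + a i := by
        have : (0:ℤ) ≤ a i := by positivity
        linarith
      have key : ∀ k : ℕ, (γ + (a i:ℤ)) + (k:ℤ)*α ∈ SgGen a := by
        intro k
        induction k with
        | zero => simpa using h1
        | succ k ih =>
          have heq : (γ + (a i:ℤ)) + ((k+1:ℕ):ℤ)*α = α + ((γ + (a i:ℤ)) + (k:ℤ)*α) := by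
            push_cast; ring
          rw [heq]
          refine Stmt16H.pf_add hα ih ?_
          have hk' : (0:ℤ) ≤ (k:ℤ)*α := mul_nonneg (by positivity) (le_of_lt hα1)
          have hx : (0:ℤ) < (γ + (a i:ℤ)) + (k:ℤ)*α := by linarith
          exact ne_of_gt hx
      have h3 := key (k₀ - 1)
      have heq2 : γ + ((k₀-1:ℕ):ℤ)*α + (a i:ℤ) = (γ + (a i:ℤ)) + ((k₀-1:ℕ):ℤ)*α := by ring
      rw [heq2]
      exact h3
    have hfα : γ + ((k₀-1:ℕ):ℤ)*α + α ∈ SgGen a := by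
      have heq : γ + ((k₀-1:ℕ):ℤ)*α + α = γ + (k₀:ℤ)*α := by
        have h1 : ((k₀-1:ℕ):ℤ) = (k₀:ℤ) - 1 := by omega
        rw [h1]; ring
      rw [heq]
      exact hk₀
    have hfeq := KEY _ hfPF hfα
    have hγeq : γ = ((n:ℤ) - (k₀:ℤ)) * α := by
      have hc : ((k₀-1:ℕ):ℤ) = (k₀:ℤ) - 1 := by omega
      rw [hc] at hfeq
      linear_combination hfeq
    have hk₀lt : (k₀:ℤ) < (n:ℤ) := by
      by_contra hcon
      push_neg at hcon
      have h1 : (n:ℤ) - k₀ ≤ 0 := by linarith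
      nlinarith
    refine ⟨n - k₀, by omega, by omega, ?_⟩
    have h1 : ((n-k₀:ℕ):ℤ) = (n:ℤ) - (k₀:ℤ) := by omega
    rw [h1]
    exact hγeq
  -- Frobenius number
  have hbd : ∃ b : ℤ, ∀ z, z ∉ SgGen a → z ≤ b := by
    refine ⟨N, fun z hz => ?_⟩
    by_contra h
    push_neg at h
    exact hz (hN z (by omega))
  obtain ⟨F, hFnot, hFub⟩ := Int.exists_greatest_of_bdd hbd ⟨α, hα.1⟩
  have hFPF : IsPF a F := by
    refine ⟨hFnot, fun i => ?_⟩
    by_contra hni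
    have h1 := hFub _ hni
    have h2 : (0:ℤ) < a i := by exact_mod_cast ha i
    linarith
  have hFeq : F = ((n:ℤ)-1)*α := by
    obtain ⟨k, hk1, hkn, hkeq⟩ := classify F hFPF
    have hle1 : ((n:ℤ)-1)*α ≤ F := hFub _ hout
    have hle2 : F ≤ ((n:ℤ)-1)*α := by
      rw [hkeq]
      exact mul_le_mul_of_nonneg_right hkn hα1.le
    linarith
  -- every gap reaches a PF
  have reach : ∀ m : ℤ, m ∉ SgGen a → ∃ δ, IsPF a δ ∧ δ - m ∈ SgGen a := by
    intro m hm
    obtain ⟨δ, ⟨hδ1, hδ2⟩, hub⟩ := Int.exists_greatest_of_bdd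
      (P := fun z => z ∉ SgGen a ∧ z - m ∈ SgGen a)
      ⟨N, fun z hz => by by_contra h; push_neg at h; exact hz.1 (hN z (by omega))⟩
      ⟨m, hm, by simpa using Stmt16H.sg_zero (a := a)⟩
    refine ⟨δ, ⟨hδ1, fun i => ?_⟩, hδ2⟩
    by_contra hni
    have hmem2 : (δ + (a i:ℤ)) - m ∈ SgGen a := by
      have h1 := Stmt16H.sg_add hδ2 (Stmt16H.sg_gen (a := a) i)
      convert h1 using 1
      ring
    have h2 := hub _ ⟨hni, hmem2⟩
    have h3 : (0:ℤ) < a i := by exact_mod_cast ha i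
    linarith
  -- conclusion
  refine ⟨F, ⟨hFnot, fun m hm => hFub m hm⟩, ?_⟩
  intro γ hγ hγF
  obtain ⟨k, hk1, hkn, hkeq⟩ := classify γ hγ
  have hkne : (k:ℤ) ≠ (n:ℤ)-1 := by
    intro h
    apply hγF
    rw [hkeq, h, hFeq]
  have hk2 : (k:ℤ) ≤ (n:ℤ)-2 := by omega
  refine ⟨?_, fun i => ?_⟩
  · have heq : F - γ = ((n:ℤ)-1-(k:ℤ))*α := by rw [hFeq, hkeq]; ring
    rw [heq]
    exact LemA _ (by omega) (by omega)
  · by_contra hni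
    obtain ⟨δ, hδPF, hδm⟩ := reach _ hni
    obtain ⟨l, hl1, hln, hleq⟩ := classify δ hδPF
    set t : ℤ := (l:ℤ) + (k:ℤ) - ((n:ℤ)-1) with htdef2
    have hδm' : t*α - a i ∈ SgGen a := by
      have heq : δ - (F - γ + (a i:ℤ)) = t*α - a i := by
        rw [hleq, hFeq, hkeq, htdef2]; ring
      rw [← heq]
      exact hδm
    have h0 : (0:ℤ) ≤ t*α - a i := Stmt16H.sg_nonneg hδm'
    have hai : (1:ℤ) ≤ a i := by exact_mod_cast ha i
    have ht1 : 1 ≤ t := by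
      by_contra hcon
      push_neg at hcon
      have h5 : t ≤ 0 := by omega
      have h6 : t*α ≤ 0 := mul_nonpos_of_nonpos_of_nonneg h5 hα1.le
      linarith
    have ht2 : t ≤ (n:ℤ)-1 := by omega
    apply LemA t ht1 ht2
    have heq2 : t*α = (t*α - a i) + a i := by ring
    rw [heq2]
    exact Stmt16H.sg_add hδm' (Stmt16H.sg_gen i)
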